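/- For every weighted argumentation graph with a finite set of arguments, initial weights in [0,1], and attack strengths in [0,1], the weighted h-Categorizer sequence converges: for every argument a, the sequence (s(a)^{(n)})_{n ≥ 1} has a limit in [0,1] as n → ∞. -/

import Mathlib

open Filter Finset Topology

private lemma tendsto_even_odd {f : ℕ → ℝ} {L : ℝ}
    (he : Filter.Tendsto (fun k => f (2 * k)) Filter.atTop (nhds L))
    (ho : Filter.Tendsto (fun k => f (2 * k + 1)) Filter.atTop (nhds L)) :
    Filter.Tendsto f Filter.atTop (nhds L) := by
  rw [Metric.tendsto_atTop] at he ho ⊢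
  intro ε hε
  obtain ⟨N1, h1⟩ := he ε hε
  obtain ⟨N2, h2⟩ := ho ε hε
  refine ⟨2 * (max N1 N2) + 1, fun n hn => ?_⟩
  rcases Nat.even_or_odd n with ⟨k, hk⟩ | ⟨k, hk⟩
  · have hk' : N1 ≤ k := by omega
    have := h1 k hk'
    rwa [show 2 * k = n by omega] at this
  · have hk' : N2 ≤ k := by omega
    have := h2 k hk'
    rwa [show 2 * k + 1 = n by omega] at this

/-- For every weighted argumentation graph with a finite set of arguments,
initial weights in `[0,1]` and attack strengths in `[0,1]`, the weighted h-Categorizer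
sequence converges: for every argument `a`, the sequence `(s(a)⁽ⁿ⁾)_{n ≥ 1}` has a limit
in `[0,1]` as `n → ∞`. -/
theorem hCategorizer_converges
    {A : Type*} [Fintype A] [Nonempty A]
    (σ : A → ℝ) (hσ : ∀ a, σ a ∈ Set.Icc (0 : ℝ) 1)
    (R : A → A → Prop) [DecidableRel R]
    (π : A → A → ℝ) (hπ : ∀ a b, π a b ∈ Set.Icc (0 : ℝ) 1)
    (hπ0 : ∀ a b, ¬ R a b → π a b = 0)
    (s : ℕ → A → ℝ)
    (hs1 : ∀ a, s 1 a = σ a)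
    (hsrec : ∀ n ≥ 1, ∀ a, s (n + 1) a =
      σ a / (1 + ∑ b ∈ Finset.univ.filter (fun b => R b a), π b a * s n b)) :
    ∀ a, ∃ L ∈ Set.Icc (0 : ℝ) 1,
      Filter.Tendsto (fun n => s n a) Filter.atTop (nhds L) := by
  classical
  set F : (A → ℝ) → A → ℝ := fun x a =>
    σ a / (1 + ∑ b ∈ Finset.univ.filter (fun b => R b a), π b a * x b) with hFdef
  have hSnn : ∀ (x : A → ℝ), (∀ b, 0 ≤ x b) → ∀ a,
      0 ≤ ∑ b ∈ Finset.univ.filter (fun b => R b a), π b a * x b := by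
    intro x hx a
    exact Finset.sum_nonneg fun b _ => mul_nonneg (hπ b a).1 (hx b)
  have hdenpos : ∀ (x : A → ℝ), (∀ b, 0 ≤ x b) → ∀ a,
      0 < 1 + ∑ b ∈ Finset.univ.filter (fun b => R b a), π b a * x b := by
    intro x hx a; linarith [hSnn x hx a]
  have hF0 : ∀ x, (∀ b, 0 ≤ x b) → ∀ a, 0 ≤ F x a := fun x hx a =>
    div_nonneg (hσ a).1 (hdenpos x hx a).le
  have hFle : ∀ x, (∀ b, 0 ≤ x b) → ∀ a, F x a ≤ σ a := by
    intro x hx a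
    exact div_le_self (hσ a).1 (by linarith [hSnn x hx a])
  have hanti : ∀ x y, (∀ b, 0 ≤ x b) → (∀ b, x b ≤ y b) → ∀ a, F y a ≤ F x a := by
    intro x y hx hxy a
    have hsum : (∑ b ∈ Finset.univ.filter (fun b => R b a), π b a * x b)
        ≤ ∑ b ∈ Finset.univ.filter (fun b => R b a), π b a * y b :=
      Finset.sum_le_sum fun b _ => mul_le_mul_of_nonneg_left (hxy b) (hπ b a).1
    have := hdenpos x hx a
    show σ a / _ ≤ σ a / _
    gcongr
    exact (hσ a).1
  have hFs : ∀ n, 1 ≤ n → ∀ a, s (n + 1) a = F (s n) a := fun n hn a => hsrec n hn a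
  -- bounds
  have hbnd : ∀ n, 1 ≤ n → ∀ a, 0 ≤ s n a ∧ s n a ≤ σ a := by
    intro n hn
    induction n, hn using Nat.le_induction with
    | base => intro a; rw [hs1]; exact ⟨(hσ a).1, le_refl _⟩
    | succ n hn ih =>
      intro a
      have hx : ∀ b, 0 ≤ s n b := fun b => (ih b).1
      rw [hFs n hn a]
      exact ⟨hF0 _ hx a, hFle _ hx a⟩
  have hnn : ∀ n, 1 ≤ n → ∀ b, 0 ≤ s n b := fun n hn b => (hbnd n hn b).1
  -- interleaving inequalities
  have H : ∀ k, (∀ a, s (2 * k + 2) a ≤ s (2 * k + 3) a) ∧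
      (∀ a, s (2 * k + 3) a ≤ s (2 * k + 1) a) := by
    intro k
    induction k with
    | zero =>
      have hs2 : ∀ a, s 2 a = F (s 1) a := hFs 1 le_rfl
      have hs3 : ∀ a, s 3 a = F (s 2) a := hFs 2 (by omega)
      have h21 : ∀ b, s 2 b ≤ s 1 b := by
        intro b
        rw [hs2 b, hs1 b]
        exact hFle _ (fun c => by rw [hs1]; exact (hσ c).1) b
      constructor
      · intro a
        have := hanti (s 2) (s 1) (hnn 2 (by omega)) h21 a
        rw [← hs2 a, ← hs3 a] at this
        simpa using this
      · intro a
        calc s (2 * 0 + 3) a = F (s 2) a := hs3 a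
          _ ≤ σ a := hFle _ (hnn 2 (by omega)) a
          _ = s (2 * 0 + 1) a := (hs1 a).symm
    | succ k ih =>
      have e2 : ∀ a, s (2 * k + 3) a = F (s (2 * k + 2)) a := by
        intro a
        rw [show 2 * k + 3 = (2 * k + 2) + 1 by omega]
        exact hFs _ (by omega) a
      have e4 : ∀ a, s (2 * k + 4) a = F (s (2 * k + 3)) a := by
        intro a
        rw [show 2 * k + 4 = (2 * k + 3) + 1 by omega]
        exact hFs _ (by omega) a
      have e5 : ∀ a, s (2 * k + 5) a = F (s (2 * k + 4)) a := by
        intro a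
        rw [show 2 * k + 5 = (2 * k + 4) + 1 by omega]
        exact hFs _ (by omega) a
      have h43 : ∀ a, s (2 * k + 4) a ≤ s (2 * k + 3) a := by
        intro a
        rw [e4 a, e2 a]
        exact hanti _ _ (hnn _ (by omega)) ih.1 a
      have h45 : ∀ a, s (2 * k + 4) a ≤ s (2 * k + 5) a := by
        intro a
        rw [e5 a, e4 a]
        exact hanti _ _ (hnn _ (by omega)) h43 a
      have h24 : ∀ a, s (2 * k + 2) a ≤ s (2 * k + 4) a := by
        intro a
        have e2' : ∀ a, s (2 * k + 2) a = F (s (2 * k + 1)) a := by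
          intro a
          rw [show 2 * k + 2 = (2 * k + 1) + 1 by omega]
          exact hFs _ (by omega) a
        rw [e4 a, e2' a]
        exact hanti _ _ (hnn _ (by omega)) ih.2 a
      have h53 : ∀ a, s (2 * k + 5) a ≤ s (2 * k + 3) a := by
        intro a
        rw [e5 a, e2 a]
        exact hanti _ _ (hnn _ (by omega)) h24 a
      constructor
      · intro a
        rw [show 2 * (k + 1) + 2 = 2 * k + 4 by omega, show 2 * (k + 1) + 3 = 2 * k + 5 by omega]
        exact h45 a
      · intro a
        rw [show 2 * (k + 1) + 3 = 2 * k + 5 by omega, show 2 * (k + 1) + 1 = 2 * k + 3 by omega]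
        exact h53 a
  -- monotone/antitone subsequences and limits
  have hoanti : ∀ a, Antitone (fun k => s (2 * k + 1) a) := by
    intro a
    apply antitone_nat_of_succ_le
    intro k
    have := (H k).2 a
    rwa [show 2 * k + 3 = 2 * (k + 1) + 1 by omega] at this
  have hemono : ∀ a, Monotone (fun k => s (2 * k + 2) a) := by
    intro a
    apply monotone_nat_of_le_succ
    intro k
    have e2' : s (2 * k + 2) a = F (s (2 * k + 1)) a := by
      rw [show 2 * k + 2 = (2 * k + 1) + 1 by omega]
      exact hFs _ (by omega) a
    have e4 : s (2 * (k + 1) + 2) a = F (s (2 * k + 3)) a := by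
      rw [show 2 * (k + 1) + 2 = (2 * k + 3) + 1 by omega]
      exact hFs _ (by omega) a
    rw [e2', e4]
    exact hanti _ _ (hnn _ (by omega)) ((H k).2) a
  set L1 : A → ℝ := fun a => ⨅ k, s (2 * k + 1) a with hL1def
  set L2 : A → ℝ := fun a => ⨆ k, s (2 * k + 2) a with hL2def
  have hbb : ∀ a, BddBelow (Set.range fun k => s (2 * k + 1) a) := by
    intro a
    refine ⟨0, ?_⟩
    rintro y ⟨k, rfl⟩
    exact (hbnd _ (by omega) a).1
  have hba : ∀ a, BddAbove (Set.range fun k => s (2 * k + 2) a) := by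
    intro a
    refine ⟨1, ?_⟩
    rintro y ⟨k, rfl⟩
    exact le_trans (hbnd _ (by omega) a).2 (hσ a).2
  have ho : ∀ a, Tendsto (fun k => s (2 * k + 1) a) atTop (nhds (L1 a)) := fun a =>
    tendsto_atTop_ciInf (hoanti a) (hbb a)
  have he : ∀ a, Tendsto (fun k => s (2 * k + 2) a) atTop (nhds (L2 a)) := fun a =>
    tendsto_atTop_ciSup (hemono a) (hba a)
  have hL2nn : ∀ a, 0 ≤ L2 a := fun a =>
    ge_of_tendsto' (he a) (fun k => (hbnd _ (by omega) a).1)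
  have hL1σ : ∀ a, L1 a ≤ σ a := by
    intro a
    have := ciInf_le (hbb a) 0
    simpa [hs1 a] using this
  have hL21 : ∀ a, L2 a ≤ L1 a := by
    intro a
    have ho' : Tendsto (fun k => s (2 * k + 3) a) atTop (nhds (L1 a)) := by
      have := (ho a).comp (tendsto_add_atTop_nat 1)
      simpa [Function.comp_def, show ∀ k : ℕ, 2 * (k + 1) + 1 = 2 * k + 3 from fun k => by omega]
        using this
    exact le_of_tendsto_of_tendsto' (he a) ho' (fun k => (H k).1 a)
  have hL1nn : ∀ a, 0 ≤ L1 a := fun a => le_trans (hL2nn a) (hL21 a)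
  -- continuity of F along pointwise limits
  have hcont : ∀ (x : ℕ → A → ℝ) (Lx : A → ℝ),
      (∀ b, Tendsto (fun k => x k b) atTop (nhds (Lx b))) → (∀ b, 0 ≤ Lx b) →
      ∀ a, Tendsto (fun k => F (x k) a) atTop (nhds (F Lx a)) := by
    intro x Lx hx hLx a
    have hsum : Tendsto
        (fun k => ∑ b ∈ Finset.univ.filter (fun b => R b a), π b a * x k b) atTop
        (nhds (∑ b ∈ Finset.univ.filter (fun b => R b a), π b a * Lx b)) :=
      tendsto_finset_sum _ fun b _ => (hx b).const_mul _
    exact tendsto_const_nhds.div (tendsto_const_nhds.add hsum) (ne_of_gt (hdenpos Lx hLx a))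
  have hFL1 : ∀ a, F L1 a = L2 a := by
    intro a
    have h1 : Tendsto (fun k => F (s (2 * k + 1)) a) atTop (nhds (F L1 a)) :=
      hcont _ _ (fun b => ho b) hL1nn a
    have h2 : (fun k => F (s (2 * k + 1)) a) = fun k => s (2 * k + 2) a := by
      funext k
      rw [show 2 * k + 2 = (2 * k + 1) + 1 by omega]
      exact (hFs _ (by omega) a).symm
    rw [h2] at h1
    exact tendsto_nhds_unique h1 (he a)
  have hFL2 : ∀ a, F L2 a = L1 a := by
    intro a
    have h1 : Tendsto (fun k => F (s (2 * k + 2)) a) atTop (nhds (F L2 a)) :=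
      hcont _ _ (fun b => he b) hL2nn a
    have h2 : (fun k => F (s (2 * k + 2)) a) = fun k => s (2 * k + 3) a := by
      funext k
      rw [show 2 * k + 3 = (2 * k + 2) + 1 by omega]
      exact (hFs _ (by omega) a).symm
    rw [h2] at h1
    have ho' : Tendsto (fun k => s (2 * k + 3) a) atTop (nhds (L1 a)) := by
      have := (ho a).comp (tendsto_add_atTop_nat 1)
      simpa [Function.comp_def, show ∀ k : ℕ, 2 * (k + 1) + 1 = 2 * k + 3 from fun k => by omega]
        using this
    exact tendsto_nhds_unique h1 ho'
  -- uniqueness: L1 = L2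
  set Sv : A → ℝ := fun a => ∑ b ∈ Finset.univ.filter (fun b => R b a), π b a * L1 b with hSvdef
  set Su : A → ℝ := fun a => ∑ b ∈ Finset.univ.filter (fun b => R b a), π b a * L2 b with hSudef
  set d : A → ℝ := fun a => L1 a - L2 a with hddef
  set D : A → ℝ := fun a => ∑ b ∈ Finset.univ.filter (fun b => R b a), π b a * d b with hDdef
  have hSvnn : ∀ a, 0 ≤ Sv a := fun a => hSnn L1 hL1nn a
  have hpv : ∀ a, (0:ℝ) < 1 + Sv a := fun a => hdenpos L1 hL1nn a
  have hpu : ∀ a, (0:ℝ) < 1 + Su a := fun a => hdenpos L2 hL2nn a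
  have hdnn : ∀ a, 0 ≤ d a := fun a => sub_nonneg.mpr (hL21 a)
  have key : ∀ a, d a = L1 a * D a / (1 + Sv a) := by
    intro a
    have h1 : L1 a = σ a / (1 + Su a) := (hFL2 a).symm
    have h2 : L2 a = σ a / (1 + Sv a) := (hFL1 a).symm
    have hDa : D a = Sv a - Su a := by
      show (∑ b ∈ Finset.univ.filter (fun b => R b a), π b a * (L1 b - L2 b)) = _
      rw [hSvdef, hSudef]
      simp [mul_sub, Finset.sum_sub_distrib]
    have pu := hpu a
    have pv := hpv a
    show L1 a - L2 a = L1 a * D a / (1 + Sv a)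
    rw [hDa, h1, h2]
    field_simp
    ring
  set r : ℝ := Finset.univ.sup' Finset.univ_nonempty
    (fun a => if L1 a = 0 then 0 else d a / L1 a) with hrdef
  have htermnn : ∀ a, 0 ≤ (if L1 a = 0 then 0 else d a / L1 a) := by
    intro a
    split
    · exact le_refl 0
    · exact div_nonneg (hdnn a) (hL1nn a)
  have hr0 : 0 ≤ r := by
    refine le_trans (htermnn (Classical.arbitrary A)) ?_
    exact Finset.le_sup' (f := fun a => if L1 a = 0 then 0 else d a / L1 a)
      (Finset.mem_univ (Classical.arbitrary A))
  have hdr : ∀ a, d a ≤ r * L1 a := by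
    intro a
    by_cases hz : L1 a = 0
    · have hd0 : d a = 0 := by rw [key a, hz, zero_mul, zero_div]
      rw [hd0, hz, mul_zero]
    · have hpos : 0 < L1 a := lt_of_le_of_ne (hL1nn a) (Ne.symm hz)
      have hle : (if L1 a = 0 then 0 else d a / L1 a) ≤ r :=
        Finset.le_sup' (f := fun a => if L1 a = 0 then 0 else d a / L1 a)
          (Finset.mem_univ a)
      rw [if_neg hz] at hle
      exact (div_le_iff₀ hpos).mp hle
  have hDr : ∀ a, D a ≤ r * Sv a := by
    intro a
    calc D a ≤ ∑ b ∈ Finset.univ.filter (fun b => R b a), π b a * (r * L1 b) :=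
          Finset.sum_le_sum fun b _ => mul_le_mul_of_nonneg_left (hdr b) (hπ b a).1
      _ = r * Sv a := by
          rw [hSvdef, Finset.mul_sum]
          exact Finset.sum_congr rfl fun b _ => by ring
  set n : ℝ := (Fintype.card A : ℝ) with hndef
  have hn0 : (0:ℝ) ≤ n := by positivity
  have hn1 : (0:ℝ) < 1 + n := by linarith
  have hL1le1 : ∀ a, L1 a ≤ 1 := fun a => le_trans (hL1σ a) (hσ a).2
  have hSvle : ∀ a, Sv a ≤ n := by
    intro a
    calc Sv a ≤ ∑ _b ∈ Finset.univ.filter (fun b => R b a), (1:ℝ) :=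
          Finset.sum_le_sum fun b _ => mul_le_one₀ (hπ b a).2 (hL1nn b) (hL1le1 b)
      _ = ((Finset.univ.filter (fun b => R b a)).card : ℝ) := by simp
      _ ≤ n := by
          rw [hndef]
          exact_mod_cast le_trans (Finset.card_filter_le _ _) (le_of_eq Finset.card_univ)
  have hda : ∀ a, d a ≤ r * (n / (1 + n)) * L1 a := by
    intro a
    have pv := hpv a
    have h1 : d a ≤ L1 a * (r * Sv a) / (1 + Sv a) := by
      rw [key a]
      gcongr
      · exact hL1nn a
      · exact hDr a
    have hfrac : Sv a / (1 + Sv a) ≤ n / (1 + n) := by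
      rw [div_le_div_iff₀ pv hn1]
      nlinarith [hSvle a, hSvnn a]
    calc d a ≤ L1 a * (r * Sv a) / (1 + Sv a) := h1
      _ = (r * L1 a) * (Sv a / (1 + Sv a)) := by ring
      _ ≤ (r * L1 a) * (n / (1 + n)) :=
          mul_le_mul_of_nonneg_left hfrac (mul_nonneg hr0 (hL1nn a))
      _ = r * (n / (1 + n)) * L1 a := by ring
  have hrc : r ≤ r * (n / (1 + n)) := by
    rw [hrdef]
    apply Finset.sup'_le
    intro a _
    by_cases hz : L1 a = 0
    · rw [if_pos hz]
      exact mul_nonneg hr0 (div_nonneg hn0 hn1.le)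
    · have hpos : 0 < L1 a := lt_of_le_of_ne (hL1nn a) (Ne.symm hz)
      rw [if_neg hz, div_le_iff₀ hpos]
      exact hda a
  have hrle0 : r ≤ 0 := by
    by_contra hcon
    push_neg at hcon
    have hfrac1 : n / (1 + n) < 1 := by
      rw [div_lt_one hn1]; linarith
    have := mul_lt_mul_of_pos_left hfrac1 hcon
    rw [mul_one] at this
    linarith
  have hreq : r = 0 := le_antisymm hrle0 hr0
  have hL12 : ∀ a, L1 a = L2 a := by
    intro a
    have h1 : d a ≤ 0 := by
      have := hdr a
      rw [hreq, zero_mul] at this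
      exact this
    have h2 : d a = 0 := le_antisymm h1 (hdnn a)
    have : L1 a - L2 a = 0 := h2
    linarith
  -- conclusion
  intro a
  refine ⟨L1 a, ⟨hL1nn a, le_trans (hL1σ a) (hσ a).2⟩, ?_⟩
  rw [← Filter.tendsto_add_atTop_iff_nat 1]
  apply tendsto_even_odd (f := fun n => s (n + 1) a)
  · show Tendsto (fun k => s (2 * k + 1) a) atTop (nhds (L1 a))
    exact ho a
  · show Tendsto (fun k => s (2 * k + 1 + 1) a) atTop (nhds (L1 a))
    have h2 : (fun k => s (2 * k + 1 + 1) a) = fun k => s (2 * k + 2) a :=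
      funext fun k => by rw [show 2 * k + 1 + 1 = 2 * k + 2 by omega]
    rw [h2, hL12 a]
    exact he a
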